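/- Suppose R = C(M) + E where C(M) = M·λ_k(β)_a⃗ with M ∈ F^(s×k) and E ∈ F^(s×n) has sum-rank weight t, and put t_i := rk_q(E^(i)). Let (Q_0, Q_1, …, Q_s) be coefficient sequences satisfying the interpolation conditions for R, let f^(l) ∈ F^k denote the l-th row of M (a coefficient vector of degree < k), and define P := Q_0 + Σ_(l=1)^s Q_l ∗ f^(l). Then for every i = 1, …, ℓ there exist GF(q)-linearly independent elements ζ^(i)_1, …, ζ^(i)_(n_i−t_i) ∈ F such that P(ζ^(i)_j)_(a_i) = 0 for all i = 1, …, ℓ and all j = 1, …, n_i − t_i. -/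

import Mathlib

namespace Stmt12

/-- `genNorm σ a i = σ^(i-1)(a) ⋯ σ(a) · a`, the generalized power function `N_i(a)`. -/
def genNorm {F : Type} [Field F] (σ : F ≃+* F) (a : F) : ℕ → F
  | 0 => 1
  | i + 1 => (⇑σ)^[i] a * genNorm σ a i

/-- Generalized operator `D_a^i(b) = σ^i(b) · N_i(a)` for `i ∈ ℕ`. -/
def opev {F : Type} [Field F] (σ : F ≃+* F) (a b : F) (i : ℕ) : F :=
  (⇑σ)^[i] b * genNorm σ a i

/-- `b` is σ-conjugate to `a`, i.e. `b = σ(c)·a·c⁻¹` for some nonzero `c`. -/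
def SConj {F : Type} [Field F] (σ : F ≃+* F) (a b : F) : Prop :=
  ∃ c : F, c ≠ 0 ∧ b = σ c * a * c⁻¹

/-- σ-generalized Moore matrix `λ_d(x)_a⃗` w.r.t. the length partition `nn`:
its row `r` applies `D_{a_i}^r` entrywise to the `i`-th block of `x`. -/
def moore {F : Type} [Field F] (σ : F ≃+* F) {ℓ : ℕ} (nn : Fin ℓ → ℕ) (aa : Fin ℓ → F)
    (d : ℕ) (x : (Σ i : Fin ℓ, Fin (nn i)) → F) :
    Matrix (Fin d) (Σ i : Fin ℓ, Fin (nn i)) F :=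
  Matrix.of fun r p => opev σ (aa p.1) (x p) (r : ℕ)

/-- `λ_d(X)_a⃗` for a matrix `X`: the stack of `λ_d(x_j)_a⃗` over the rows of `X`. -/
def mooreMat {F : Type} [Field F] (σ : F ≃+* F) {ℓ : ℕ} (nn : Fin ℓ → ℕ) (aa : Fin ℓ → F)
    {s : ℕ} (d : ℕ) (X : Matrix (Fin s) (Σ i : Fin ℓ, Fin (nn i)) F) :
    Matrix (Fin s × Fin d) (Σ i : Fin ℓ, Fin (nn i)) F :=
  Matrix.of fun r p => opev σ (aa p.1) (X r.1 p) (r.2 : ℕ)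

/-- `rk_q` of a vector: the `K`-dimension of the `K`-span of its entries. -/
noncomputable def rkq (K : Type) [Field K] {F : Type} [Field F] [Algebra K F] {ι : Type}
    (v : ι → F) : ℕ :=
  Module.finrank K (Submodule.span K (Set.range v))

/-- `rk_q` of a matrix: the `K`-dimension of the `K`-span of its columns. -/
noncomputable def rkqMat (K : Type) [Field K] {F : Type} [Field F] [Algebra K F]
    {s : ℕ} {ι : Type} (X : Matrix (Fin s) ι F) : ℕ :=
  Module.finrank K (Submodule.span K (Set.range fun j : ι => fun r : Fin s => X r j))

/-- Sum-rank weight of a blockwise vector. -/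
noncomputable def wtV (K : Type) [Field K] {F : Type} [Field F] [Algebra K F] {ℓ : ℕ}
    (nn : Fin ℓ → ℕ) (x : (Σ i : Fin ℓ, Fin (nn i)) → F) : ℕ :=
  ∑ i, rkq K fun μ : Fin (nn i) => x ⟨i, μ⟩

/-- Sum-rank weight of a blockwise matrix. -/
noncomputable def wtM (K : Type) [Field K] {F : Type} [Field F] [Algebra K F] {s ℓ : ℕ}
    (nn : Fin ℓ → ℕ) (X : Matrix (Fin s) (Σ i : Fin ℓ, Fin (nn i)) F) : ℕ :=
  ∑ i, rkqMat K (Matrix.of fun (r : Fin s) (μ : Fin (nn i)) => X r ⟨i, μ⟩)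

/-- Codeword `C(M) = M · λ_k(β)_a⃗` of the `s`-interleaved linearized Reed–Solomon code. -/
def codeword {F : Type} [Field F] (σ : F ≃+* F) {ℓ : ℕ} (nn : Fin ℓ → ℕ) (aa : Fin ℓ → F)
    (β : (Σ i : Fin ℓ, Fin (nn i)) → F) {s : ℕ} (k : ℕ) (M : Matrix (Fin s) (Fin k) F) :
    Matrix (Fin s) (Σ i : Fin ℓ, Fin (nn i)) F :=
  M * moore σ nn aa k β

/-- A coefficient vector as a finitely supported coefficient sequence. -/
noncomputable def ofVec {F : Type} [Field F] {d : ℕ} (v : Fin d → F) : ℕ →₀ F :=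
  ∑ u : Fin d, Finsupp.single (u : ℕ) (v u)

/-- Generalized operator evaluation `g(b)_a = Σ_u g_u · σ^u(b) · N_u(a)` of a skew
polynomial (finitely supported coefficient sequence). -/
noncomputable def evalOp {F : Type} [Field F] (σ : F ≃+* F) (g : ℕ →₀ F) (a b : F) : F :=
  g.sum fun u c => c * opev σ a b u

/-- Skew product of coefficient sequences: `(g ∗ h)_w = Σ_{u+v=w} g_u · σ^u(h_v)`. -/
noncomputable def skewMulF {F : Type} [Field F] (σ : F ≃+* F) (g h : ℕ →₀ F) : ℕ →₀ F :=
  g.sum fun u cu => h.sum fun v cv => Finsupp.single (u + v) (cu * (⇑σ)^[u] cv)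

section Aux

variable {K F : Type} [Field K] [Field F] [Algebra K F] (σ : F ≃+* F)

lemma it_add (u : ℕ) (x y : F) : (⇑σ)^[u] (x + y) = (⇑σ)^[u] x + (⇑σ)^[u] y := by
  induction u generalizing x y with
  | zero => rfl
  | succ u ih =>
      rw [Function.iterate_succ_apply', ih, map_add]
      simp [Function.iterate_succ_apply']

lemma it_mul (u : ℕ) (x y : F) : (⇑σ)^[u] (x * y) = (⇑σ)^[u] x * (⇑σ)^[u] y := by
  induction u generalizing x y with
  | zero => rfl
  | succ u ih =>
      rw [Function.iterate_succ_apply', ih, map_mul]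
      simp [Function.iterate_succ_apply']

lemma it_one (u : ℕ) : (⇑σ)^[u] (1 : F) = 1 := by
  induction u with
  | zero => rfl
  | succ u ih => rw [Function.iterate_succ_apply', ih, map_one]

lemma it_sum (u : ℕ) {ι : Type*} (s : Finset ι) (f : ι → F) :
    (⇑σ)^[u] (∑ x ∈ s, f x) = ∑ x ∈ s, (⇑σ)^[u] (f x) := by
  induction u with
  | zero => rfl
  | succ u ih =>
      rw [Function.iterate_succ_apply', ih, map_sum]
      simp [Function.iterate_succ_apply']

lemma it_smul (hfix : ∀ x : F, σ x = x ↔ x ∈ Set.range (algebraMap K F))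
    (u : ℕ) (c : K) (x : F) : (⇑σ)^[u] (c • x) = c • (⇑σ)^[u] x := by
  induction u generalizing x with
  | zero => rfl
  | succ u ih =>
      rw [Function.iterate_succ_apply', ih]
      rw [Algebra.smul_def, Algebra.smul_def, map_mul, (hfix _).2 ⟨c, rfl⟩]
      simp [Function.iterate_succ_apply']

lemma evalOp_def (g : ℕ →₀ F) (a b : F) :
    evalOp σ g a b = Finsupp.linearCombination F (opev σ a b) g := by
  rw [evalOp, Finsupp.linearCombination_apply]
  exact Finsupp.sum_congr fun u _ => (smul_eq_mul _ _).symm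

lemma evalOp_add_left (g g' : ℕ →₀ F) (a b : F) :
    evalOp σ (g + g') a b = evalOp σ g a b + evalOp σ g' a b := by
  simp [evalOp_def]

lemma evalOp_sum_left {ι : Type*} (s : Finset ι) (G : ι → (ℕ →₀ F)) (a b : F) :
    evalOp σ (∑ l ∈ s, G l) a b = ∑ l ∈ s, evalOp σ (G l) a b := by
  simp [evalOp_def]

lemma evalOp_single (u : ℕ) (c : F) (a b : F) :
    evalOp σ (Finsupp.single u c) a b = c * opev σ a b u := by
  simp [evalOp_def, Finsupp.linearCombination_single]

lemma genNorm_add (a : F) (u v : ℕ) :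
    genNorm σ a (u + v) = (⇑σ)^[u] (genNorm σ a v) * genNorm σ a u := by
  induction v with
  | zero => simp [genNorm, it_one]
  | succ v ih =>
      show genNorm σ a ((u + v) + 1) = _
      rw [genNorm, ih, genNorm, it_mul, Function.iterate_add_apply]
      ring

lemma opev_shift (a b : F) (u v : ℕ) :
    (⇑σ)^[u] (opev σ a b v) * genNorm σ a u = opev σ a b (u + v) := by
  rw [opev, opev, it_mul, genNorm_add, ← Function.iterate_add_apply]
  ring

lemma evalOp_skewMul (g h : ℕ →₀ F) (a b : F) :
    evalOp σ (skewMulF σ g h) a b = evalOp σ g a (evalOp σ h a b) := by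
  rw [skewMulF, Finsupp.sum, evalOp_sum_left]
  conv_rhs => rw [evalOp, Finsupp.sum]
  refine Finset.sum_congr rfl fun u _ => ?_
  rw [Finsupp.sum, evalOp_sum_left, evalOp, Finsupp.sum, opev, it_sum,
    Finset.sum_mul, Finset.mul_sum]
  refine Finset.sum_congr rfl fun v _ => ?_
  rw [evalOp_single, it_mul, ← opev_shift σ a b u v]
  ring

noncomputable def evalOpB (hfix : ∀ x : F, σ x = x ↔ x ∈ Set.range (algebraMap K F))
    (g : ℕ →₀ F) (a : F) : F →ₗ[K] F where
  toFun b := evalOp σ g a b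
  map_add' x y := by
    simp [evalOp, Finsupp.sum, opev, it_add, add_mul, mul_add, Finset.sum_add_distrib]
  map_smul' c x := by
    simp [evalOp, Finsupp.sum, opev, it_smul σ hfix, smul_mul_assoc, mul_smul_comm,
      Finset.smul_sum]

lemma evalOp_sum_smul (hfix : ∀ x : F, σ x = x ↔ x ∈ Set.range (algebraMap K F))
    (g : ℕ →₀ F) (a : F) {ι : Type*} (s : Finset ι)
    (c : ι → K) (x : ι → F) :
    evalOp σ g a (∑ μ ∈ s, c μ • x μ) = ∑ μ ∈ s, c μ • evalOp σ g a (x μ) := by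
  show evalOpB σ hfix g a (∑ μ ∈ s, c μ • x μ) = _
  rw [map_sum]
  exact Finset.sum_congr rfl fun μ _ => (evalOpB σ hfix g a).map_smul (c μ) (x μ)

lemma evalOp_ofVec {d : ℕ} (v : Fin d → F) (a b : F) :
    evalOp σ (ofVec v) a b = ∑ u : Fin d, v u * opev σ a b (u : ℕ) := by
  rw [ofVec, evalOp_sum_left]
  simp [evalOp_single]

end Aux

/-- Roots of `P = Q_0 + Σ_l Q_l ∗ f^(l)`.
If `R = C(M) + E` and `(Q_0, Q_1, …, Q_s)` satisfies the interpolation conditions for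
`R`, then for every block `i` there are `GF(q)`-linearly independent elements
`ζ^(i)_1, …, ζ^(i)_{n_i − t_i}` on which `P` vanishes under generalized operator
evaluation w.r.t. `a_i`, where `t_i = rk_q(E^(i))` and `f^(l)` is the `l`-th row of `M`. -/
theorem roots_of_P
    {K F : Type} [Field K] [Field F] [Algebra K F] [Fintype K] [Fintype F]
    (σ : F ≃+* F)
    (hfix : ∀ x : F, σ x = x ↔ x ∈ Set.range (algebraMap K F))
    {ℓ : ℕ} (hℓ : 1 ≤ ℓ) (nn : Fin ℓ → ℕ) (aa : Fin ℓ → F)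
    (ha0 : ∀ i, aa i ≠ 0)
    (haconj : ∀ i j : Fin ℓ, i ≠ j → ¬ SConj σ (aa i) (aa j))
    (β : (Σ i : Fin ℓ, Fin (nn i)) → F)
    (hβ : ∀ i, LinearIndependent K fun μ : Fin (nn i) => β ⟨i, μ⟩)
    {s : ℕ} (hs : 1 ≤ s) {k n t : ℕ} (hn : n = ∑ i, nn i)
    (hk : 1 ≤ k) (hkn : k ≤ n)
    (M : Matrix (Fin s) (Fin k) F)
    (E R : Matrix (Fin s) (Σ i : Fin ℓ, Fin (nn i)) F)
    (hR : R = codeword σ nn aa β k M + E)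
    (ht : wtM K nn E = t)
    (Q0 : ℕ →₀ F) (Q : Fin s → (ℕ →₀ F))
    (hint : ∀ p : Σ i : Fin ℓ, Fin (nn i),
      evalOp σ Q0 (aa p.1) (β p) + ∑ l : Fin s, evalOp σ (Q l) (aa p.1) (R l p) = 0) :
    ∀ i : Fin ℓ,
      ∃ ζ : Fin (nn i -
          rkqMat K (Matrix.of fun (r : Fin s) (μ : Fin (nn i)) => E r ⟨i, μ⟩)) → F,
        LinearIndependent K ζ ∧
        ∀ j, evalOp σ (Q0 + ∑ l : Fin s, skewMulF σ (Q l) (ofVec (M l)))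
          (aa i) (ζ j) = 0 := by

  intro i
  classical
  set ti := rkqMat K (Matrix.of fun (r : Fin s) (μ : Fin (nn i)) => E r ⟨i, μ⟩) with hti
  set Ecol : Fin (nn i) → (Fin s → F) := fun μ r => E r ⟨i, μ⟩ with hEcol
  set φ : (Fin (nn i) → K) →ₗ[K] (Fin s → F) := Fintype.linearCombination K Ecol with hφ
  have hrange : LinearMap.range φ = Submodule.span K (Set.range Ecol) :=
    Fintype.range_linearCombination K Ecol
  have hrk : ti = Module.finrank K (LinearMap.range φ) := by
    rw [hrange]; rfl
  have hrn := LinearMap.finrank_range_add_finrank_ker φ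
  rw [Module.finrank_pi, Fintype.card_fin] at hrn
  have hd : Module.finrank K (LinearMap.ker φ) = nn i - ti := by omega
  let b := Module.finBasisOfFinrankEq K (LinearMap.ker φ) hd
  set ψ : (Fin (nn i) → K) →ₗ[K] F :=
    Fintype.linearCombination K (fun μ => β ⟨i, μ⟩) with hψdef
  have hψ : LinearMap.ker ψ = ⊥ := by
    rw [LinearMap.ker_eq_bot']
    intro m hm
    have h0 : ∑ μ, m μ • β ⟨i, μ⟩ = 0 := hm
    funext μ
    exact Fintype.linearIndependent_iff.mp (hβ i) m h0 μ
  refine ⟨fun j => ψ (b j), ?_, ?_⟩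
  · have h1 : LinearIndependent K fun j => ((b j : Fin (nn i) → K)) :=
      b.linearIndependent.map' (LinearMap.ker φ).subtype (Submodule.ker_subtype _)
    exact h1.map' ψ hψ
  · intro j
    set c : Fin (nn i) → K := (b j : Fin (nn i) → K) with hc
    have hker : φ c = 0 := (b j).2
    have hE : ∀ r : Fin s, ∑ μ, c μ • E r ⟨i, μ⟩ = 0 := by
      intro r
      have h2 := congrFun hker r
      rw [hφ, Fintype.linearCombination_apply] at h2
      simpa [Ecol, Finset.sum_apply] using h2
    have hζ : ψ (b j) = ∑ μ, c μ • β ⟨i, μ⟩ := by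
      rw [hψdef, Fintype.linearCombination_apply]
    have hcw : ∀ (l : Fin s) (μ : Fin (nn i)),
        evalOp σ (ofVec (M l)) (aa i) (β ⟨i, μ⟩) = R l ⟨i, μ⟩ - E l ⟨i, μ⟩ := by
      intro l μ
      rw [evalOp_ofVec, hR]
      have : codeword σ nn aa β k M l ⟨i, μ⟩
          = ∑ u : Fin k, M l u * opev σ (aa i) (β ⟨i, μ⟩) (u : ℕ) := by
        rw [codeword, Matrix.mul_apply]; rfl
      simp [Matrix.add_apply, ← this]
    have hinner : ∀ l : Fin s,
        evalOp σ (ofVec (M l)) (aa i) (ψ (b j)) = ∑ μ, c μ • R l ⟨i, μ⟩ := by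
      intro l
      rw [hζ, evalOp_sum_smul σ hfix]
      simp only [hcw, smul_sub, Finset.sum_sub_distrib]
      rw [← Finset.sum_sub_distrib]
      simp [hE l]
    rw [evalOp_add_left, evalOp_sum_left]
    have hQl : ∀ l : Fin s,
        evalOp σ (skewMulF σ (Q l) (ofVec (M l))) (aa i) (ψ (b j))
          = ∑ μ, c μ • evalOp σ (Q l) (aa i) (R l ⟨i, μ⟩) := by
      intro l
      rw [evalOp_skewMul, hinner l, evalOp_sum_smul σ hfix]
    simp only [hQl]
    rw [hζ, evalOp_sum_smul σ hfix, Finset.sum_comm]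
    rw [← Finset.sum_add_distrib]
    have : ∀ μ : Fin (nn i),
        c μ • evalOp σ Q0 (aa i) (β ⟨i, μ⟩)
          + ∑ l : Fin s, c μ • evalOp σ (Q l) (aa i) (R l ⟨i, μ⟩) = 0 := by
      intro μ
      rw [← Finset.smul_sum, ← smul_add, hint ⟨i, μ⟩, smul_zero]
    simp only [this, Finset.sum_const_zero]


end Stmt12
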